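/- Let z₀ ∈ ℝ, h > 0, ρ₁ > 0. Let U ⊆ ℝ² be an open set invariant under the reflection (ρ,z) ↦ (ρ, 2z₀ − z) containing the segments [0,ρ₁]×{z₀−h}, [0,ρ₁]×{z₀+h} and {ρ₁}×[z₀−h, z₀+h]. Let σ, ω be continuously differentiable on U ∩ {ρ > 0}, with σ(ρ, 2z₀ − z) = σ(ρ, z) and ω(ρ, 2z₀ − z) = ω(ρ, z). Set η = ρ²e^σ, P = (ρ/4)(σ_ρ² − σ_z²) + (ρ/(4η²))(ω_ρ² − ω_z²) and Q = (ρ/2)(σ_ρσ_z + η^{−2}ω_ρω_z), and assume P and Q extend continuously to U. Let q : U → ℝ be continuous on U, continuously differentiable on U ∩ {ρ > 0}, with ∂_ρ q = P and ∂_z q = Q there. Then q(0, z₀ + h) = q(0, z₀ − h). -/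

import Mathlib

/-- Partial derivative with respect to the first (ρ) variable. -/
noncomputable def pdr (f : ℝ × ℝ → ℝ) (p : ℝ × ℝ) : ℝ :=
  deriv (fun x => f (x, p.2)) p.1

/-- Partial derivative with respect to the second (z) variable. -/
noncomputable def pdz (f : ℝ × ℝ → ℝ) (p : ℝ × ℝ) : ℝ :=
  deriv (fun y => f (p.1, y)) p.2

open Filter Set

lemma slice_fst_diff {f : ℝ × ℝ → ℝ} {x c : ℝ}
    (h : DifferentiableAt ℝ f (x, c)) :
    DifferentiableAt ℝ (fun t => f (t, c)) x :=
  h.comp x (differentiableAt_fun_id.prodMk (differentiableAt_const c))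

lemma slice_snd_diff {f : ℝ × ℝ → ℝ} {x c : ℝ}
    (h : DifferentiableAt ℝ f (x, c)) :
    DifferentiableAt ℝ (fun y => f (x, y)) c :=
  h.comp c ((differentiableAt_const x).prodMk differentiableAt_fun_id)

lemma pdr_even (z₀ : ℝ) {U : Set (ℝ × ℝ)} (hU : IsOpen U) {f : ℝ × ℝ → ℝ}
    (hsym : ∀ p ∈ U, 0 < p.1 → f (p.1, 2 * z₀ - p.2) = f p)
    {x z : ℝ} (hp : (x, z) ∈ U) (hx : 0 < x) :
    pdr f (x, 2 * z₀ - z) = pdr f (x, z) := by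
  simp only [pdr]
  apply Filter.EventuallyEq.deriv_eq
  have h1 : ∀ᶠ t in nhds x, (t, z) ∈ U :=
    (hU.preimage (continuous_id.prodMk continuous_const)).mem_nhds hp
  have h2 : ∀ᶠ t in nhds x, (0 : ℝ) < t := eventually_gt_nhds hx
  filter_upwards [h1, h2] with t ht ht0
  exact hsym (t, z) ht ht0

lemma pdz_odd (z₀ : ℝ) {U : Set (ℝ × ℝ)} (hU : IsOpen U) {f : ℝ × ℝ → ℝ}
    (hsym : ∀ p ∈ U, 0 < p.1 → f (p.1, 2 * z₀ - p.2) = f p)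
    {x z : ℝ} (hp : (x, z) ∈ U) (hx : 0 < x)
    (hdiff : DifferentiableAt ℝ f (x, 2 * z₀ - z)) :
    pdz f (x, z) = -pdz f (x, 2 * z₀ - z) := by
  set g : ℝ → ℝ := fun y => f (x, y) with hg
  have hgd : DifferentiableAt ℝ g (2 * z₀ - z) := slice_snd_diff hdiff
  set d : ℝ := deriv g (2 * z₀ - z) with hd
  have h1 : HasDerivAt g d (2 * z₀ - z) := hgd.hasDerivAt
  have hinner : HasDerivAt (fun y : ℝ => 2 * z₀ - y) (-1) z := by
    simpa using (hasDerivAt_id' z).const_sub (2 * z₀)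
  have h2 : HasDerivAt (fun y => g (2 * z₀ - y)) (d * (-1)) z :=
    HasDerivAt.comp z h1 hinner
  have h3 : (fun y => g (2 * z₀ - y)) =ᶠ[nhds z] g := by
    have h1' : ∀ᶠ y in nhds z, (x, y) ∈ U :=
      (hU.preimage ((continuous_const).prodMk continuous_id)).mem_nhds hp
    filter_upwards [h1'] with y hy
    exact hsym (x, y) hy hx
  have h4 : HasDerivAt g (d * (-1)) z := h2.congr_of_eventuallyEq h3.symm
  have : deriv g z = d * (-1) := h4.deriv
  simp only [pdz]
  rw [this]; ring

theorem q_equal_on_axis_sigma_even_omega_even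
    (z₀ h ρ₁ : ℝ) (hh : 0 < h) (hρ₁ : 0 < ρ₁)
    (U : Set (ℝ × ℝ)) (hU : IsOpen U)
    (hUsym : ∀ p ∈ U, (p.1, 2 * z₀ - p.2) ∈ U)
    (hsegm : ∀ x ∈ Set.Icc (0 : ℝ) ρ₁, (x, z₀ - h) ∈ U)
    (hsegp : ∀ x ∈ Set.Icc (0 : ℝ) ρ₁, (x, z₀ + h) ∈ U)
    (hsegv : ∀ y ∈ Set.Icc (z₀ - h) (z₀ + h), (ρ₁, y) ∈ U)
    (σ ω : ℝ × ℝ → ℝ)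
    (hσ : ContDiffOn ℝ 1 σ (U ∩ {p : ℝ × ℝ | 0 < p.1}))
    (hω : ContDiffOn ℝ 1 ω (U ∩ {p : ℝ × ℝ | 0 < p.1}))
    
    (hσsym : ∀ p ∈ U, 0 < p.1 → σ (p.1, 2 * z₀ - p.2) = σ p)
    (hωsym : ∀ p ∈ U, 0 < p.1 → ω (p.1, 2 * z₀ - p.2) = ω p)
    (η P Q : ℝ × ℝ → ℝ)
    (hη : ∀ p, η p = p.1 ^ 2 * Real.exp (σ p))
    (hP : ∀ p ∈ U ∩ {p : ℝ × ℝ | 0 < p.1},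
      P p = p.1 / 4 * ((pdr σ p) ^ 2 - (pdz σ p) ^ 2)
        + p.1 / (4 * (η p) ^ 2) * ((pdr ω p) ^ 2 - (pdz ω p) ^ 2))
    (hQ : ∀ p ∈ U ∩ {p : ℝ × ℝ | 0 < p.1},
      Q p = p.1 / 2 * (pdr σ p * pdz σ p + pdr ω p * pdz ω p / (η p) ^ 2))
    (hPcont : ContinuousOn P U) (hQcont : ContinuousOn Q U)
    (q : ℝ × ℝ → ℝ)
    (hqcont : ContinuousOn q U)
    (hqC1 : ContDiffOn ℝ 1 q (U ∩ {p : ℝ × ℝ | 0 < p.1}))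
    (hqr : ∀ p ∈ U ∩ {p : ℝ × ℝ | 0 < p.1}, pdr q p = P p)
    (hqz : ∀ p ∈ U ∩ {p : ℝ × ℝ | 0 < p.1}, pdz q p = Q p) :
    q (0, z₀ + h) = q (0, z₀ - h) := by
  set V : Set (ℝ × ℝ) := U ∩ {p : ℝ × ℝ | 0 < p.1} with hV
  have hVopen : IsOpen V := hU.inter (isOpen_lt continuous_const continuous_fst)
  have hdiffOf : ∀ {f : ℝ × ℝ → ℝ}, ContDiffOn ℝ 1 f V → ∀ p ∈ V,
      DifferentiableAt ℝ f p := fun hf p hp =>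
    (hf.contDiffAt (hVopen.mem_nhds hp)).differentiableAt one_ne_zero
  -- symmetry of P and Q
  have hPsym : ∀ x z : ℝ, (x, z) ∈ U → 0 < x → P (x, 2 * z₀ - z) = P (x, z) := by
    intro x z hp hx
    have hp' : (x, 2 * z₀ - z) ∈ U := hUsym (x, z) hp
    have hσr := pdr_even z₀ hU hσsym hp hx
    have hωr := pdr_even z₀ hU hωsym hp hx
    have hσz := pdz_odd z₀ hU hσsym hp hx (hdiffOf hσ _ ⟨hp', hx⟩)
    have hωz := pdz_odd z₀ hU hωsym hp hx (hdiffOf hω _ ⟨hp', hx⟩)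
    have hηe : η (x, 2 * z₀ - z) = η (x, z) := by
      rw [hη, hη]; simp only
      rw [hσsym (x, z) hp hx]
    have hσz' : pdz σ (x, 2 * z₀ - z) = -pdz σ (x, z) := by rw [hσz]; ring
    have hωz' : pdz ω (x, 2 * z₀ - z) = -pdz ω (x, z) := by rw [hωz]; ring
    rw [hP _ ⟨hp', hx⟩, hP _ ⟨hp, hx⟩]
    simp only
    rw [hσr, hωr, hσz', hωz', hηe]
    ring
  have hQsym : ∀ x z : ℝ, (x, z) ∈ U → 0 < x → Q (x, 2 * z₀ - z) = -Q (x, z) := by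
    intro x z hp hx
    have hp' : (x, 2 * z₀ - z) ∈ U := hUsym (x, z) hp
    have hσr := pdr_even z₀ hU hσsym hp hx
    have hωr := pdr_even z₀ hU hωsym hp hx
    have hσz := pdz_odd z₀ hU hσsym hp hx (hdiffOf hσ _ ⟨hp', hx⟩)
    have hωz := pdz_odd z₀ hU hωsym hp hx (hdiffOf hω _ ⟨hp', hx⟩)
    have hηe : η (x, 2 * z₀ - z) = η (x, z) := by
      rw [hη, hη]; simp only
      rw [hσsym (x, z) hp hx]
    have hσz' : pdz σ (x, 2 * z₀ - z) = -pdz σ (x, z) := by rw [hσz]; ring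
    have hωz' : pdz ω (x, 2 * z₀ - z) = -pdz ω (x, z) := by rw [hωz]; ring
    rw [hQ _ ⟨hp', hx⟩, hQ _ ⟨hp, hx⟩]
    simp only
    rw [hσr, hωr, hσz', hωz', hηe]
    ring
  -- FTC on the three segments
  have hslab : ∀ c : ℝ, (∀ x ∈ Set.Icc (0:ℝ) ρ₁, (x, c) ∈ U) →
      ∫ x in (0:ℝ)..ρ₁, P (x, c) = q (ρ₁, c) - q (0, c) := by
    intro c hseg
    apply intervalIntegral.integral_eq_sub_of_hasDerivAt_of_le hρ₁.le
    · exact hqcont.comp ((continuous_id.prodMk continuous_const).continuousOn)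
        (fun x hx => hseg x hx)
    · intro x hx
      have hmem : ((x, c) : ℝ × ℝ) ∈ V := ⟨hseg x ⟨hx.1.le, hx.2.le⟩, hx.1⟩
      have hd : DifferentiableAt ℝ (fun t => q (t, c)) x :=
        slice_fst_diff (hdiffOf hqC1 _ hmem)
      have := hd.hasDerivAt
      have hder : deriv (fun t => q (t, c)) x = P (x, c) := hqr _ hmem
      rwa [hder] at this
    · apply ContinuousOn.intervalIntegrable
      rw [Set.uIcc_of_le hρ₁.le]
      exact hPcont.comp ((continuous_id.prodMk continuous_const).continuousOn)
        (fun x hx => hseg x hx)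
  have hA := hslab (z₀ - h) hsegm
  have hB := hslab (z₀ + h) hsegp
  -- the two horizontal integrals are equal
  have hAB : ∫ x in (0:ℝ)..ρ₁, P (x, z₀ + h) = ∫ x in (0:ℝ)..ρ₁, P (x, z₀ - h) := by
    apply intervalIntegral.integral_congr_ae
    apply MeasureTheory.ae_of_all
    intro x hx
    rw [Set.uIoc_of_le hρ₁.le] at hx
    have hp : (x, z₀ - h) ∈ U := hsegm x ⟨hx.1.le, hx.2⟩
    have := hPsym x (z₀ - h) hp hx.1
    have harg : 2 * z₀ - (z₀ - h) = z₀ + h := by ring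
    rw [harg] at this
    exact this
  -- vertical integral
  have hvcont : ContinuousOn (fun y => Q (ρ₁, y)) (Set.Icc (z₀ - h) (z₀ + h)) :=
    hQcont.comp ((continuous_const.prodMk continuous_id).continuousOn)
      (fun y hy => hsegv y hy)
  have hint : ∀ a b : ℝ, z₀ - h ≤ a → a ≤ b → b ≤ z₀ + h →
      IntervalIntegrable (fun y => Q (ρ₁, y)) MeasureTheory.volume a b := by
    intro a b h1 h2 h3
    apply ContinuousOn.intervalIntegrable
    exact hvcont.mono (by rw [Set.uIcc_of_le h2]; intro y hy; exact ⟨h1.trans hy.1, hy.2.trans h3⟩)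
  have hmid1 : z₀ - h ≤ z₀ := by linarith
  have hmid2 : z₀ ≤ z₀ + h := by linarith
  have hCsplit : ∫ y in (z₀ - h)..(z₀ + h), Q (ρ₁, y)
      = (∫ y in (z₀ - h)..z₀, Q (ρ₁, y)) + ∫ y in z₀..(z₀ + h), Q (ρ₁, y) :=
    (intervalIntegral.integral_add_adjacent_intervals
      (hint _ _ le_rfl hmid1 hmid2) (hint _ _ hmid1 hmid2 le_rfl)).symm
  have hCneg : ∫ y in (z₀ - h)..z₀, Q (ρ₁, y) = -∫ y in z₀..(z₀ + h), Q (ρ₁, y) := by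
    have hsub : (∫ y in z₀..(z₀ + h), Q (ρ₁, 2 * z₀ - y))
        = ∫ y in (2 * z₀ - (z₀ + h))..(2 * z₀ - z₀), Q (ρ₁, y) :=
      intervalIntegral.integral_comp_sub_left (fun y => Q (ρ₁, y)) (2 * z₀)
    have harg1 : 2 * z₀ - (z₀ + h) = z₀ - h := by ring
    have harg2 : 2 * z₀ - z₀ = z₀ := by ring
    rw [harg1, harg2] at hsub
    rw [← hsub]
    have : (∫ y in z₀..(z₀ + h), Q (ρ₁, 2 * z₀ - y))
        = ∫ y in z₀..(z₀ + h), -Q (ρ₁, y) := by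
      apply intervalIntegral.integral_congr_ae
      apply MeasureTheory.ae_of_all
      intro y hy
      rw [Set.uIoc_of_le hmid2] at hy
      exact hQsym ρ₁ y (hsegv y ⟨by linarith [hy.1], hy.2⟩) hρ₁
    rw [this, intervalIntegral.integral_neg]
  have hCzero : ∫ y in (z₀ - h)..(z₀ + h), Q (ρ₁, y) = 0 := by
    rw [hCsplit, hCneg]; ring
  have hC : ∫ y in (z₀ - h)..(z₀ + h), Q (ρ₁, y) = q (ρ₁, z₀ + h) - q (ρ₁, z₀ - h) := by
    refine intervalIntegral.integral_eq_sub_of_hasDerivAt_of_le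
      (f := fun y => q (ρ₁, y)) (f' := fun y => Q (ρ₁, y)) (by linarith) ?_ ?_ ?_
    · exact hqcont.comp ((continuous_const.prodMk continuous_id).continuousOn)
        (fun y hy => hsegv y hy)
    · intro y hy
      have hmem : ((ρ₁, y) : ℝ × ℝ) ∈ V := ⟨hsegv y ⟨hy.1.le, hy.2.le⟩, hρ₁⟩
      have hd : DifferentiableAt ℝ (fun t => q (ρ₁, t)) y :=
        slice_snd_diff (hdiffOf hqC1 _ hmem)
      have := hd.hasDerivAt
      have hder : deriv (fun t => q (ρ₁, t)) y = Q (ρ₁, y) := hqz _ hmem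
      rwa [hder] at this
    · exact hint _ _ le_rfl (by linarith) le_rfl
  have hqeq : q (ρ₁, z₀ + h) = q (ρ₁, z₀ - h) := by
    have := hC; rw [hCzero] at this; linarith
  have := hAB
  rw [hA, hB] at this
  linarith
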